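/- Let λ = λ±(θ) with λ² − 2|a|λ cos θ + 1 = 0 (so λ is a nonzero complex number), and suppose pₙ(λ) = 0 with λ ≠ 0, where pₙ(λ) = (λ²/F₁(λ))[Fₙ(λ) − |a|²F_{n−1}(λ)] and Fₙ(λ±(θ)) = ±2i(|a|λ±(θ))ⁿ sin nθ. Then θ satisfies sin²(nθ) = −(|a|²/|b|²)·sin²θ, where |b|² = 1 − |a|². -/

import Mathlib

open Complex

/-- reduction of the eigenvalue equation `Fₙ(λ) = |a|²F_{n−1}(λ)`
(with `Fₙ(λ±(θ)) = ±2i(|a|λ±(θ))ⁿ sin nθ`, here the `+` branch) to the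
transcendental equation `sin²(nθ) = −(|a|²/|b|²) sin²θ`, where `|b|² = 1 − |a|²`
and `λ` satisfies `λ² − 2|a|λcos θ + 1 = 0`, `λ ≠ 0`. -/
theorem stmt_6 (a b : ℂ) (ha0 : 0 < ‖a‖) (ha1 : ‖a‖ < 1)
    (hab : ‖a‖ ^ 2 + ‖b‖ ^ 2 = 1)
    (θ lam : ℂ) (n : ℕ) (hn : 1 ≤ n)
    (hlam : lam ^ 2 - 2 * (‖a‖ : ℂ) * lam * Complex.cos θ + 1 = 0)
    (hlam0 : lam ≠ 0)
    (heig : 2 * I * ((‖a‖ : ℂ) * lam) ^ n * Complex.sin (n * θ) =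
      (‖a‖ : ℂ) ^ 2 *
        (2 * I * ((‖a‖ : ℂ) * lam) ^ (n - 1) * Complex.sin ((n - 1 : ℕ) * θ))) :
    Complex.sin (n * θ) ^ 2 =
      -(((‖a‖ : ℂ) ^ 2 / (‖b‖ : ℂ) ^ 2)) * Complex.sin θ ^ 2 := by
  set A : ℂ := (‖a‖ : ℂ) with hA
  have hA0 : A ≠ 0 := by
    rw [hA]
    exact Complex.ofReal_ne_zero.mpr (ne_of_gt ha0)
  have hAl : A * lam ≠ 0 := mul_ne_zero hA0 hlam0
  have hC : (2 : ℂ) * I * (A * lam) ^ (n - 1) ≠ 0 := by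
    apply mul_ne_zero
    · simp [I_ne_zero]
    · exact pow_ne_zero _ hAl
  -- rewrite (A*lam)^n = (A*lam)^(n-1) * (A*lam)
  have hpow : (A * lam) ^ n = (A * lam) ^ (n - 1) * (A * lam) := by
    conv_lhs => rw [show n = (n - 1) + 1 by omega]
    rw [pow_succ]
  have hcast : ((n - 1 : ℕ) : ℂ) = (n : ℂ) - 1 := by
    push_cast [Nat.cast_sub hn]; ring
  have hsin : Complex.sin ((n - 1 : ℕ) * θ)
      = Complex.sin (n * θ) * Complex.cos θ - Complex.cos (n * θ) * Complex.sin θ := by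
    rw [hcast, show ((n : ℂ) - 1) * θ = n * θ - θ by ring, Complex.sin_sub]
  have E2 : A * lam * Complex.sin (n * θ)
      = A ^ 2 * (Complex.sin (n * θ) * Complex.cos θ - Complex.cos (n * θ) * Complex.sin θ) := by
    have := heig
    rw [hpow, hsin] at this
    have h' : (2 * I * (A * lam) ^ (n - 1)) * (A * lam * Complex.sin (n * θ))
        = (2 * I * (A * lam) ^ (n - 1)) * (A ^ 2 * (Complex.sin (n * θ) * Complex.cos θ - Complex.cos (n * θ) * Complex.sin θ)) := by
      linear_combination this
    exact mul_left_cancel₀ hC h'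
  have E2' : lam * Complex.sin (n * θ)
      = A * (Complex.sin (n * θ) * Complex.cos θ - Complex.cos (n * θ) * Complex.sin θ) := by
    have h' : A * (lam * Complex.sin (n * θ))
        = A * (A * (Complex.sin (n * θ) * Complex.cos θ - Complex.cos (n * θ) * Complex.sin θ)) := by
      linear_combination E2
    exact mul_left_cancel₀ hA0 h'
  have P1 : Complex.sin (n * θ) ^ 2 + Complex.cos (n * θ) ^ 2 = 1 :=
    Complex.sin_sq_add_cos_sq _
  have P2 : Complex.sin θ ^ 2 + Complex.cos θ ^ 2 = 1 :=
    Complex.sin_sq_add_cos_sq _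
  have key : (A ^ 2 - 1) * Complex.sin (n * θ) ^ 2 = A ^ 2 * Complex.sin θ ^ 2 := by
    linear_combination (lam * Complex.sin (n * θ)
        - A * (Complex.sin (n * θ) * Complex.cos θ - Complex.cos (n * θ) * Complex.sin θ)
        - 2 * A * Complex.cos (n * θ) * Complex.sin θ) * E2'
      - Complex.sin (n * θ) ^ 2 * hlam
      - A ^ 2 * Complex.sin (n * θ) ^ 2 * P2
      + A ^ 2 * Complex.sin θ ^ 2 * P1
  have hB : ((‖b‖ : ℂ)) ^ 2 = 1 - A ^ 2 := by
    have h := congrArg (fun x : ℝ => (x : ℂ)) hab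
    push_cast at h
    rw [hA]; linear_combination h
  have h1A : (1 : ℂ) - A ^ 2 ≠ 0 := by
    rw [hA]
    have h : (0:ℝ) < 1 - ‖a‖ ^ 2 := by nlinarith
    intro hc
    have h2 : ((1 - ‖a‖ ^ 2 : ℝ) : ℂ) = 0 := by push_cast; linear_combination hc
    exact absurd (Complex.ofReal_eq_zero.mp h2) (ne_of_gt h)
  rw [hB]
  field_simp
  linear_combination -key
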